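/- In a Grothendieck topos, let A be a connected object and let X be an object split by A, i.e. there exist a set S and an isomorphism A ⨯ X ≅ A ⨯ γ*(S) commuting with the projections to A. Then the canonical morphism ∐_{f ∈ Hom(A, X)} A ⟶ A ⨯ X, whose f-component is the pairing ⟨𝟙 A, f⟩, is an isomorphism. -/

import Mathlib

/-!
Formalisation of a statement from "On the profinite fundamental group of a
connected Grothendieck topos" (Berger–Iwaniack).  A Grothendieck topos is
modelled as `Sheaf J (Type u)` for a small site `(C, J)`.
-/

open CategoryTheory CategoryTheory.Limits

universe u

attribute [instance high] Sheaf.instHasColimitsOfShape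

/-- A subobject `s` of `X` is complemented if it has a complement in the
subobject lattice of `X`. -/
def IsComplementedSub {C : Type u} [SmallCategory C] {J : GrothendieckTopology C}
    {X : Sheaf J (Type u)} (s : Subobject X) : Prop :=
  ∃ t : Subobject X, s ⊓ t = ⊥ ∧ s ⊔ t = ⊤

/-- An object is decidable if its diagonal, regarded as a subobject of `X ⨯ X`,
is complemented. -/
def IsDecidableObj {C : Type u} [SmallCategory C] {J : GrothendieckTopology C}
    (X : Sheaf J (Type u)) : Prop :=
  IsComplementedSub (Subobject.mk (diag X))

/-- An object is connected if it is not initial and its only complemented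
subobjects are `⊥` and `⊤`. -/
def IsConnectedObj {C : Type u} [SmallCategory C] {J : GrothendieckTopology C}
    (X : Sheaf J (Type u)) : Prop :=
  (¬ Nonempty (IsInitial X)) ∧
    ∀ s : Subobject X, IsComplementedSub s → s = ⊥ ∨ s = ⊤

/-- An object is locally connected if it is (isomorphic to) a coproduct of
connected objects. -/
def IsLocallyConnectedObj {C : Type u} [SmallCategory C] {J : GrothendieckTopology C}
    (X : Sheaf J (Type u)) : Prop :=
  ∃ (I : Type u) (Z : I → Sheaf J (Type u)),
    (∀ i, IsConnectedObj (Z i)) ∧ Nonempty (X ≅ ∐ Z)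

/-- An object is locally constant if it is trivialised, with constant fibres,
by some cover of the terminal object. -/
def IsLocallyConstantObj {C : Type u} [SmallCategory C] {J : GrothendieckTopology C}
    (X : Sheaf J (Type u)) : Prop :=
  ∃ (I : Type u) (U : I → Sheaf J (Type u)),
    Epi (terminal.from (∐ U)) ∧
    ∀ i, ∃ (S : Type u)
      (e : X ⨯ U i ≅ (constantSheaf J (Type u)).obj S ⨯ U i),
      e.hom ≫ Limits.prod.snd = Limits.prod.snd

/-- An object is locally finite if it is trivialised, with finite constant
fibres, by some cover of the terminal object. -/
def IsLocallyFiniteObj {C : Type u} [SmallCategory C] {J : GrothendieckTopology C}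
    (X : Sheaf J (Type u)) : Prop :=
  ∃ (I : Type u) (U : I → Sheaf J (Type u)),
    Epi (terminal.from (∐ U)) ∧
    ∀ i, ∃ (n : ℕ)
      (e : X ⨯ U i ≅ (constantSheaf J (Type u)).obj (ULift.{u} (Fin n)) ⨯ U i),
      e.hom ≫ Limits.prod.snd = Limits.prod.snd

/-- An object is finite if it is locally finite and a finite coproduct of
connected objects. -/
def IsFiniteObj {C : Type u} [SmallCategory C] {J : GrothendieckTopology C}
    (X : Sheaf J (Type u)) : Prop :=
  IsLocallyFiniteObj X ∧
    ∃ (n : ℕ) (Z : Fin n → Sheaf J (Type u)),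
      (∀ k, IsConnectedObj (Z k)) ∧ Nonempty (X ≅ ∐ Z)

/-- An object is a sum of finite objects if it is isomorphic to a coproduct of
finite objects. -/
def IsSumOfFiniteObj {C : Type u} [SmallCategory C] {J : GrothendieckTopology C}
    (X : Sheaf J (Type u)) : Prop :=
  ∃ (I : Type u) (Z : I → Sheaf J (Type u)),
    (∀ i, IsFiniteObj (Z i)) ∧ Nonempty (X ≅ ∐ Z)

/-- A Galois object: a connected, globally supported object `A` such that the
canonical morphism `∐_{g ∈ Aut A} A ⟶ A ⨯ A` is an isomorphism. -/
def IsGaloisObj {C : Type u} [SmallCategory C] {J : GrothendieckTopology C}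
    (A : Sheaf J (Type u)) : Prop :=
  IsConnectedObj A ∧ Epi (terminal.from A) ∧
    IsIso (Sigma.desc (f := fun _ : Aut A => A)
      (fun g => Limits.prod.lift (𝟙 A) g.hom))

namespace SplittingCanonicalIsoProof

open CategoryTheory CategoryTheory.Limits

/-! ### Van Kampen property of coproducts in `Type u` -/

/-- Any colimit cocone over a discrete diagram in `Type u` is a van Kampen colimit. -/
theorem types_cofan_vk {ι : Type u} {F : Discrete ι ⥤ Type u} {c : Cocone F}
    (hc : IsColimit c) : IsVanKampenColimit c := by
  classical
  let X : ι → Type u := F.obj ∘ Discrete.mk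
  have hF : F = Discrete.functor X :=
    Functor.hext (fun i => rfl) (by rintro ⟨i⟩ ⟨j⟩ ⟨⟨rfl : i = j⟩⟩; simp [X])
  clear_value X
  subst hF
  let c0 : Cofan X := Cofan.mk (Σ i, X i) (fun i => TypeCat.ofHom fun (x : X i) => (⟨i, x⟩ : Σ i, X i))
  have hc0 : IsColimit c0 := mkCofanColimit _ (fun t => TypeCat.ofHom fun p => t.inj p.1 p.2)
    (fun t j => rfl) (fun t m hm => ConcreteCategory.hom_ext _ _ fun p => types_congr_hom (hm p.1) p.2)
  suffices h0 : IsVanKampenColimit c0 from h0.of_iso (IsColimit.uniqueUpToIso hc0 hc)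
  intro F' c' α g hg hα
  let Y : ι → Type u := F'.obj ∘ Discrete.mk
  have hF' : F' = Discrete.functor Y :=
    Functor.hext (fun i => rfl) (by rintro ⟨i⟩ ⟨j⟩ ⟨⟨rfl : i = j⟩⟩; simp [Y])
  clear_value Y
  subst hF'
  have hg' : ∀ (i : ι) (y : Y i), g (c'.ι.app ⟨i⟩ y) = ⟨i, α.app ⟨i⟩ y⟩ := fun i y =>
    (types_congr_hom (congrFun (congrArg NatTrans.app hg) ⟨i⟩) y).symm
  constructor
  · rintro ⟨hc'⟩ ⟨i⟩
    let c1 : Cofan Y := Cofan.mk (Σ i, Y i) (fun i => TypeCat.ofHom fun (y : Y i) => (⟨i, y⟩ : Σ i, Y i))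
    have hc1 : IsColimit c1 := mkCofanColimit _ (fun t => TypeCat.ofHom fun p => t.inj p.1 p.2)
      (fun t j => rfl) (fun t m hm => ConcreteCategory.hom_ext _ _ fun p => types_congr_hom (hm p.1) p.2)
    have hk : Function.Bijective (fun p : Σ i, Y i => c'.ι.app ⟨p.1⟩ p.2) := by
      have he : (fun p : Σ i, Y i => c'.ι.app ⟨p.1⟩ p.2)
          = ⇑(IsColimit.coconePointUniqueUpToIso hc1 hc').hom := by
        funext p
        exact (types_congr_hom (IsColimit.comp_coconePointUniqueUpToIso_hom hc1 hc' ⟨p.1⟩) p.2).symm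
      rw [he]
      exact (isIso_iff_bijective _).mp inferInstance
    have key : ∀ (t : c'.pt) (x : X i), g t = ⟨i, x⟩ →
        ∃! y : Y i, c'.ι.app ⟨i⟩ y = t ∧ α.app ⟨i⟩ y = x := by
      intro t x hx
      obtain ⟨⟨j, y⟩, hy⟩ := hk.2 t
      have hy' : c'.ι.app ⟨j⟩ y = t := hy
      have hsig : (⟨j, α.app ⟨j⟩ y⟩ : Σ i, X i) = ⟨i, x⟩ := by
        rw [← hg' j y, hy', hx]
      obtain ⟨h1, h2⟩ := Sigma.mk.inj_iff.mp hsig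
      subst h1
      refine ⟨y, ⟨hy', eq_of_heq h2⟩, ?_⟩
      rintro y' ⟨hy'', -⟩
      have : (⟨j, y'⟩ : Σ i, Y i) = ⟨j, y⟩ := hk.1 (hy''.trans hy'.symm)
      exact eq_of_heq (Sigma.mk.inj_iff.mp this).2
    have comm : c'.ι.app ⟨i⟩ ≫ g = α.app ⟨i⟩ ≫ c0.ι.app ⟨i⟩ := ConcreteCategory.hom_ext _ _ fun y => hg' i y
    exact IsPullback.of_isLimit (PullbackCone.IsLimit.mk comm
      (fun s => TypeCat.ofHom fun w => ((key (s.fst w) (s.snd w) (types_congr_hom s.condition w)).exists).choose)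
      (fun s => ConcreteCategory.hom_ext _ _ fun w =>
        ((key (s.fst w) (s.snd w) (types_congr_hom s.condition w)).exists).choose_spec.1)
      (fun s => ConcreteCategory.hom_ext _ _ fun w =>
        ((key (s.fst w) (s.snd w) (types_congr_hom s.condition w)).exists).choose_spec.2)
      (fun s m hm1 hm2 => ConcreteCategory.hom_ext _ _ fun w =>
        (key (s.fst w) (s.snd w) (types_congr_hom s.condition w)).unique
          ⟨types_congr_hom hm1 w, types_congr_hom hm2 w⟩
          ((key (s.fst w) (s.snd w) (types_congr_hom s.condition w)).exists).choose_spec))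
  · intro H
    have hinj : ∀ (i : ι) (y z : Y i), c'.ι.app ⟨i⟩ y = c'.ι.app ⟨i⟩ z → y = z := by
      intro i y z hyz
      have h1 := hg' i y
      have h2 := hg' i z
      rw [hyz] at h1
      have haz : α.app ⟨i⟩ y = α.app ⟨i⟩ z :=
        eq_of_heq (Sigma.mk.inj_iff.mp (h1.symm.trans h2)).2
      have := PullbackCone.IsLimit.hom_ext (H ⟨i⟩).isLimit
        (k := TypeCat.ofHom fun _ : PUnit.{u+1} => y) (l := TypeCat.ofHom fun _ : PUnit.{u+1} => z)
        (ConcreteCategory.hom_ext _ _ fun _ => hyz) (ConcreteCategory.hom_ext _ _ fun _ => haz)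
      exact types_congr_hom this PUnit.unit
    have dec : ∀ t : c'.pt, ∃ p : Σ i, Y i, c'.ι.app ⟨p.1⟩ p.2 = t := by
      intro t
      obtain ⟨i, x, hx⟩ : ∃ i x, g t = ⟨i, x⟩ := ⟨(g t).1, (g t).2, rfl⟩
      have hcond : (TypeCat.ofHom fun _ : PUnit.{u+1} => t) ≫ g
          = (TypeCat.ofHom fun _ : PUnit.{u+1} => x) ≫ c0.ι.app ⟨i⟩ := ConcreteCategory.hom_ext _ _ fun _ => hx
      exact ⟨⟨i, (H ⟨i⟩).lift (TypeCat.ofHom fun _ : PUnit.{u+1} => t) (TypeCat.ofHom fun _ => x) hcond PUnit.unit⟩,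
        types_congr_hom ((H ⟨i⟩).lift_fst (TypeCat.ofHom fun _ : PUnit.{u+1} => t) (TypeCat.ofHom fun _ => x) hcond) PUnit.unit⟩
    have hkinj : Function.Injective (fun p : Σ i, Y i => c'.ι.app ⟨p.1⟩ p.2) := by
      rintro ⟨i, y⟩ ⟨j, z⟩ h
      have h1 := hg' i y
      have h2 := hg' j z
      rw [show c'.ι.app ⟨i⟩ y = c'.ι.app ⟨j⟩ z from h] at h1
      have hij : (⟨i, α.app ⟨i⟩ y⟩ : Σ i, X i) = ⟨j, α.app ⟨j⟩ z⟩ := h1.symm.trans h2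
      obtain ⟨h3, -⟩ := Sigma.mk.inj_iff.mp hij
      subst h3
      exact congrArg (Sigma.mk i) (hinj i y z h)
    let E : (Σ i, Y i) ≃ c'.pt :=
      Equiv.ofBijective (fun p : Σ i, Y i => c'.ι.app ⟨p.1⟩ p.2) ⟨hkinj, fun t => dec t⟩
    refine ⟨mkCofanColimit _ (fun s => TypeCat.ofHom fun t => s.inj (E.symm t).1 (E.symm t).2) ?_ ?_⟩
    · intro s j
      refine ConcreteCategory.hom_ext _ _ fun y => ?_
      have hy : E.symm (c'.ι.app ⟨j⟩ y) = ⟨j, y⟩ := E.symm_apply_apply ⟨j, y⟩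
      show s.inj (E.symm (c'.ι.app ⟨j⟩ y)).1 (E.symm (c'.ι.app ⟨j⟩ y)).2 = s.inj j y
      rw [hy]
    · intro s m hm
      refine ConcreteCategory.hom_ext _ _ fun t => ?_
      obtain ⟨⟨i, y⟩, rfl⟩ := dec t
      have h1 : m (c'.ι.app ⟨i⟩ y) = s.inj i y := types_congr_hom (hm i) y
      have hy : E.symm (c'.ι.app ⟨i⟩ y) = ⟨i, y⟩ := E.symm_apply_apply ⟨i, y⟩
      show m (c'.ι.app ⟨i⟩ y)
          = s.inj (E.symm (c'.ι.app ⟨i⟩ y)).1 (E.symm (c'.ι.app ⟨i⟩ y)).2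
      rw [h1, hy]

/-! ### Van Kampen coproducts in sheaf categories -/

variable {C : Type u} [SmallCategory C] {J : GrothendieckTopology C}

theorem sheaf_cofan_vk {ι : Type u} {F : Discrete ι ⥤ Sheaf J (Type u)} {c : Cocone F}
    (hc : IsColimit c) : IsVanKampenColimit c := by
  have hpsh : IsVanKampenColimit (colimit.cocone (F ⋙ sheafToPresheaf J (Type u))) :=
    isVanKampenColimit_of_evaluation _ _ (fun X =>
      types_cofan_vk (isColimitOfPreserves ((evaluation Cᵒᵖ (Type u)).obj X)
        (colimit.isColimit _)))
  have H := hpsh.map_reflective (sheafificationAdjunction J (Type u))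
  let α : F ⟶ (F ⋙ sheafToPresheaf J (Type u)) ⋙ presheafToSheaf J (Type u) :=
    F.rightUnitor.inv ≫ Functor.whiskerLeft F (inv (sheafificationAdjunction J (Type u)).counit)
  haveI : IsIso α := by
    have : ∀ (j : Discrete ι), IsIso (α.app j) := by
      intro j
      dsimp [α]
      infer_instance
    apply NatIso.isIso_of_isIso_app
  have H2 := H.precompose_isIso α
  exact H2.of_iso (IsColimit.uniqueUpToIso H2.isColimit hc)

/-- In a sheaf topos, a subobject given by one leg of a colimit cofan of monos is
complemented. -/
theorem cofan_inj_complemented {ι : Type u} {P : ι → Sheaf J (Type u)} {c : Cofan P}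
    (hcolim : IsColimit c) (hm : ∀ u, Mono (c.inj u)) (s : ι) :
    IsComplementedSub (Subobject.mk (c.inj s)) := by
  classical
  haveI := hm s
  let Q : Sheaf J (Type u) := ∐ (fun t : {t : ι // t ≠ s} => P t.1)
  let n : Q ⟶ c.pt := Sigma.desc (fun t => c.inj t.1)
  let d : ∀ (_t : BinaryCofan (P s) Q), Cofan P := fun t => Cofan.mk t.pt (fun u =>
    if h : u = s then eqToHom (congrArg P h) ≫ t.inl
    else Sigma.ι (fun t : {t : ι // t ≠ s} => P t.1) (⟨u, h⟩ : {t : ι // t ≠ s}) ≫ t.inr)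
  have hd : ∀ (t : BinaryCofan (P s) Q) (u : ι), c.inj u ≫ hcolim.desc (d t)
      = (if h : u = s then eqToHom (congrArg P h) ≫ t.inl
        else Sigma.ι (fun t : {t : ι // t ≠ s} => P t.1) (⟨u, h⟩ : {t : ι // t ≠ s}) ≫ t.inr) :=
    fun t u => hcolim.fac (d t) ⟨u⟩
  have hnu : ∀ (u : {t : ι // t ≠ s}),
      Sigma.ι (fun t : {t : ι // t ≠ s} => P t.1) u ≫ n = c.inj u.1 := by
    intro u
    simp [n]
  have hbc : IsColimit (BinaryCofan.mk (c.inj s) n) := by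
    refine BinaryCofan.isColimitMk (fun t => hcolim.desc (d t)) (fun t => ?_) (fun t => ?_)
      (fun t m h1 h2 => ?_)
    · rw [hd t s, dif_pos rfl, eqToHom_refl]; exact Category.id_comp _
    · apply Sigma.hom_ext
      intro u
      rw [← Category.assoc, hnu u, hd t u.1, dif_neg u.2]
    · apply hcolim.hom_ext
      rintro ⟨u⟩
      show c.inj u ≫ m = c.inj u ≫ hcolim.desc (d t)
      rw [hd t u]
      by_cases h : u = s
      · subst h
        rw [dif_pos rfl, eqToHom_refl]; refine Eq.trans ?_ (Category.id_comp _).symm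
        exact h1
      · rw [dif_neg h, ← h2, ← Category.assoc, hnu ⟨u, h⟩]
  haveI hmn : Mono n := FinitaryExtensive.mono_inr_of_isColimit hbc
  refine ⟨Subobject.mk n, ?_, ?_⟩
  · refine le_antisymm ?_ bot_le
    have hFl := Subobject.inf_arrow_factors_left (Subobject.mk (c.inj s)) (Subobject.mk n)
    have hFr := Subobject.inf_arrow_factors_right (Subobject.mk (c.inj s)) (Subobject.mk n)
    have hpb := FinitaryExtensive.isPullback_initial_to_binaryCofan hbc
    have hcond : (((Subobject.mk (c.inj s)).factorThru _ hFl)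
          ≫ (Subobject.underlyingIso (c.inj s)).hom) ≫ c.inj s
        = (((Subobject.mk n).factorThru _ hFr) ≫ (Subobject.underlyingIso n).hom) ≫ n := by
      rw [Category.assoc, Subobject.underlyingIso_hom_comp_eq_mk,
        Category.assoc, Subobject.underlyingIso_hom_comp_eq_mk,
        Subobject.factorThru_arrow, Subobject.factorThru_arrow]
    have l := hpb.lift _ _ hcond
    haveI := initialIsInitial.isIso_to l
    have hKinit : IsInitial
        ((Subobject.mk (c.inj s) ⊓ Subobject.mk n : Subobject c.pt) : Sheaf J (Type u)) :=
      IsInitial.ofIso initialIsInitial (asIso l).symm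
    rw [Subobject.bot_eq_initial_to]
    exact Subobject.le_mk_of_comm l (hKinit.hom_ext _ _)
  · have hls : Subobject.mk (c.inj s) ≤ Subobject.mk (c.inj s) ⊔ Subobject.mk n := le_sup_left
    have hrs : Subobject.mk n ≤ Subobject.mk (c.inj s) ⊔ Subobject.mk n := le_sup_right
    have hda : (hbc.desc (BinaryCofan.mk (Subobject.ofMkLE _ _ hls) (Subobject.ofMkLE _ _ hrs)))
        ≫ (Subobject.mk (c.inj s) ⊔ Subobject.mk n).arrow = 𝟙 c.pt := by
      apply hbc.hom_ext
      rintro ⟨⟨⟩⟩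
      · refine (hbc.fac_assoc _ _ _).trans ?_
        show Subobject.ofMkLE _ _ hls ≫ _ = _
        rw [Subobject.ofMkLE_arrow]
        exact (Category.comp_id _).symm
      · refine (hbc.fac_assoc _ _ _).trans ?_
        show Subobject.ofMkLE _ _ hrs ≫ _ = _
        rw [Subobject.ofMkLE_arrow]
        exact (Category.comp_id _).symm
    haveI : IsSplitEpi (Subobject.mk (c.inj s) ⊔ Subobject.mk n).arrow :=
      IsSplitEpi.mk' ⟨_, hda⟩
    haveI : IsIso (Subobject.mk (c.inj s) ⊔ Subobject.mk n).arrow :=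
      isIso_of_mono_of_isSplitEpi _
    exact Subobject.eq_top_of_isIso_arrow _

/-- A morphism from a connected object into a coproduct factors through one of the
coproduct inclusions. -/
theorem conn_factor {ι : Type u} (A : Sheaf J (Type u)) (hA : IsConnectedObj A)
    (Z : ι → Sheaf J (Type u)) (h : A ⟶ ∐ Z) :
    ∃ (s : ι) (g : A ⟶ Z s), h = g ≫ Sigma.ι Z s := by
  classical
  have hvk : IsVanKampenColimit (colimit.cocone (Discrete.functor Z)) :=
    sheaf_cofan_vk (colimit.isColimit _)
  let P : ι → Sheaf J (Type u) := fun s => pullback h (Sigma.ι Z s)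
  let c' : Cofan P := Cofan.mk A (fun s => pullback.fst h (Sigma.ι Z s))
  let α : Discrete.functor P ⟶ Discrete.functor Z :=
    Discrete.natTrans (fun s => pullback.snd h (Sigma.ι Z s.as))
  have hw : α ≫ (colimit.cocone (Discrete.functor Z)).ι
      = c'.ι ≫ (Functor.const _).map h := by
    apply NatTrans.ext
    funext ⟨s⟩
    exact pullback.condition.symm
  have hc' : IsColimit c' :=
    ((hvk c' α h hw (NatTrans.equifibered_of_discrete _)).mpr
      (fun j => by
        rcases j with ⟨s⟩
        exact IsPullback.of_hasPullback h (Sigma.ι Z s))).some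
  have hmono : ∀ u : ι, Mono (c'.inj u) := by
    intro u
    haveI : Mono (Sigma.ι Z u) := mono_of_cofan_isVanKampen hvk ⟨u⟩
    show Mono (pullback.fst h (Sigma.ι Z u))
    infer_instance
  by_cases hex : ∃ s, Subobject.mk (c'.inj s) = ⊤
  · obtain ⟨s, hs⟩ := hex
    haveI := hmono s
    haveI : IsIso (pullback.fst h (Sigma.ι Z s)) := by
      haveI : Mono (pullback.fst h (Sigma.ι Z s)) := hmono s
      rw [Subobject.isIso_iff_mk_eq_top]
      exact hs
    refine ⟨s, inv (pullback.fst h (Sigma.ι Z s)) ≫ pullback.snd h (Sigma.ι Z s), ?_⟩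
    rw [Category.assoc, ← pullback.condition, IsIso.inv_hom_id_assoc]
  · push_neg at hex
    exfalso
    have hbot : ∀ s, Subobject.mk (c'.inj s) = ⊥ := by
      intro s
      rcases hA.2 _ (cofan_inj_complemented hc' hmono s) with hb | ht
      · exact hb
      · exact absurd ht (hex s)
    have hinit : ∀ s, IsInitial (P s) := by
      intro s
      haveI := hmono s
      have hle : Subobject.mk (c'.inj s) ≤ Subobject.mk (initial.to A) := by
        rw [← Subobject.bot_eq_initial_to]
        exact le_of_eq (hbot s)
      have l := Subobject.ofMkLEMk (c'.inj s) (initial.to A) hle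
      haveI := initialIsInitial.isIso_to l
      exact IsInitial.ofIso initialIsInitial (asIso l).symm
    refine hA.1 ⟨?_⟩
    refine IsInitial.ofUniqueHom (fun W => hc'.desc (Cofan.mk W (fun s => (hinit s).to W))) ?_
    intro W m
    apply hc'.hom_ext
    rintro ⟨u⟩
    exact (hinit u).hom_ext _ _

/-! ### The product functor preserves colimits -/

/-- In a category with chosen finite products, the tensor functor `A ⊗ -` agrees with the
categorical product functor `A ⨯ -`. -/
noncomputable def tensorIsoProd {D : Type*} [Category D] [CartesianMonoidalCategory D]
    [HasBinaryProducts D] (A : D) :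
    MonoidalCategory.tensorLeft A ≅ Limits.prod.functor.obj A :=
  CartesianMonoidalCategory.tensorLeftIsoProd A

end SplittingCanonicalIsoProof

/-- if a connected object `A` splits `X`, then the splitting may
be identified with the canonical morphism `∐_{f ∈ Hom(A,X)} A ⟶ A ⨯ X`. -/
theorem splitting_canonical_iso
    {C : Type u} [SmallCategory C] {J : GrothendieckTopology C}
    (A X : Sheaf J (Type u)) (hA : IsConnectedObj A)
    (hsplit : ∃ (S : Type u)
      (e : A ⨯ X ≅ A ⨯ (constantSheaf J (Type u)).obj S),
      e.hom ≫ Limits.prod.fst = Limits.prod.fst) :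
    IsIso (Sigma.desc (f := fun _ : (A ⟶ X) => A)
      (fun f => Limits.prod.lift (𝟙 A) f)) := by
  classical
  obtain ⟨S, e, he⟩ := hsplit
  -- `constantSheaf` preserves colimits
  have adjγ : constantSheaf J (Type u) ⊣ sheafToPresheaf J (Type u) ⋙ lim :=
    (Limits.constLimAdj (J := Cᵒᵖ) (C := Type u)).comp (sheafificationAdjunction J (Type u))
  haveI : PreservesColimitsOfSize.{u, u} (constantSheaf J (Type u)) :=
    adjγ.leftAdjoint_preservesColimits
  -- `constantSheaf` preserves the terminal object
  haveI : PreservesLimitsOfSize.{0, 0} (Functor.const Cᵒᵖ : Type u ⥤ _) :=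
    (Limits.colimConstAdj (J := Cᵒᵖ) (C := Type u)).rightAdjoint_preservesLimits
  haveI : PreservesLimit (Functor.empty.{0} (Type u)) (constantSheaf J (Type u)) := by
    show PreservesLimit (Functor.empty.{0} (Type u))
      ((Functor.const Cᵒᵖ : Type u ⥤ _) ⋙ presheafToSheaf J (Type u))
    infer_instance
  have hTerm : IsTerminal ((constantSheaf J (Type u)).obj PUnit.{u+1}) :=
    IsTerminal.isTerminalObj (constantSheaf J (Type u)) _ Types.isTerminalPunit
  -- the coproduct cofan on the set `S`
  have hS : IsColimit (Cofan.mk S (fun s => TypeCat.ofHom fun (_ : PUnit.{u+1}) => s)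
      : Cofan (fun _ : S => PUnit.{u+1})) :=
    mkCofanColimit _ (fun t => TypeCat.ofHom fun s => t.inj s PUnit.unit) (fun t s => rfl)
      (fun t m hm => ConcreteCategory.hom_ext _ _ fun s => types_congr_hom (hm s) PUnit.unit)
  -- the product functor preserves colimits
  have h0 : PreservesColimitsOfShape (Discrete S) (MonoidalCategory.tensorLeft A) := inferInstance
  haveI : PreservesColimitsOfShape (Discrete S) (Limits.prod.functor.obj A) :=
    @preservesColimitsOfShape_of_natIso _ _ _ _ _ _ _ _ (SplittingCanonicalIsoProof.tensorIsoProd A) h0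
  haveI : PreservesColimitsOfShape (Discrete S)
      (constantSheaf J (Type u) ⋙ Limits.prod.functor.obj A) := inferInstance
  have hGS := isColimitOfPreserves (constantSheaf J (Type u) ⋙ Limits.prod.functor.obj A) hS
  -- transport to the cofan with injections `prod.lift (𝟙 A) _`
  let inj : S → (A ⟶ A ⨯ (constantSheaf J (Type u)).obj S) := fun s =>
    Limits.prod.lift (𝟙 A) (hTerm.from A ≫ (constantSheaf J (Type u)).map (TypeCat.ofHom fun _ => s))
  let βc : A ≅ A ⨯ (constantSheaf J (Type u)).obj PUnit.{u+1} :=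
    { hom := Limits.prod.lift (𝟙 A) (hTerm.from A)
      inv := Limits.prod.fst
      hom_inv_id := by rw [Limits.prod.lift_fst]
      inv_hom_id := by
        apply Limits.prod.hom_ext
        · rw [Category.assoc, Limits.prod.lift_fst, Category.comp_id, Category.id_comp]
        · exact hTerm.hom_ext _ _ }
  let β : Discrete.functor (fun _ : S => A) ≅
      Discrete.functor (fun _ : S => PUnit.{u+1}) ⋙
        (constantSheaf J (Type u) ⋙ Limits.prod.functor.obj A) :=
    Discrete.natIso (fun _ => βc)
  have hcA : IsColimit (Cofan.mk (A ⨯ (constantSheaf J (Type u)).obj S) inj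
      : Cofan (fun _ : S => A)) := by
    have h2 := (IsColimit.precomposeHomEquiv β
      ((constantSheaf J (Type u) ⋙ Limits.prod.functor.obj A).mapCocone
        (Cofan.mk S (fun s => TypeCat.ofHom fun (_ : PUnit.{u+1}) => s)))).symm hGS
    refine h2.ofIsoColimit (Cocones.ext (Iso.refl _) ?_)
    rintro ⟨s⟩
    show (βc.hom ≫ Limits.prod.map (𝟙 A) ((constantSheaf J (Type u)).map (TypeCat.ofHom fun _ => s)))
        ≫ 𝟙 _ = inj s
    rw [Category.comp_id]
    apply Limits.prod.hom_ext
    · dsimp only [βc, inj]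
      rw [Category.assoc, Limits.prod.map_fst, Category.comp_id, Limits.prod.lift_fst, Limits.prod.lift_fst]
    · dsimp only [βc, inj]
      rw [Category.assoc, Limits.prod.map_snd, ← Category.assoc, Limits.prod.lift_snd, Limits.prod.lift_snd]
  let ws : (∐ fun _ : S => A) ≅ A ⨯ (constantSheaf J (Type u)).obj S :=
    colimit.isoColimitCocone ⟨_, hcA⟩
  have hws : ∀ s : S, Sigma.ι (fun _ : S => A) s ≫ ws.hom = inj s := fun s =>
    colimit.isoColimitCocone_ι_hom ⟨_, hcA⟩ ⟨s⟩
  let w : (∐ fun _ : S => A) ≅ A ⨯ X := ws ≪≫ e.symm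
  have hfst : e.inv ≫ (Limits.prod.fst : A ⨯ X ⟶ A) = Limits.prod.fst := by
    rw [Iso.inv_comp_eq]
    exact he.symm
  have hwfst : ∀ s : S, Sigma.ι (fun _ : S => A) s ≫ w.hom ≫ Limits.prod.fst = 𝟙 A := by
    intro s
    have : w.hom = ws.hom ≫ e.inv := rfl
    rw [this, Category.assoc, hfst, ← Category.assoc, hws s]
    dsimp only [inj]
    rw [Limits.prod.lift_fst]
  let t : S → (A ⟶ X) := fun s => Sigma.ι (fun _ : S => A) s ≫ w.hom ≫ Limits.prod.snd
  have hwt : ∀ s : S, Sigma.ι (fun _ : S => A) s ≫ w.hom = Limits.prod.lift (𝟙 A) (t s) := by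
    intro s
    apply Limits.prod.hom_ext
    · rw [Category.assoc, Limits.prod.lift_fst]
      exact hwfst s
    · rw [Category.assoc, Limits.prod.lift_snd]
  -- the indexing function is bijective
  have hvk : IsVanKampenColimit (colimit.cocone (Discrete.functor (fun _ : S => A))) :=
    SplittingCanonicalIsoProof.sheaf_cofan_vk (colimit.isColimit _)
  have tinj : Function.Injective t := by
    intro s s' hss
    by_contra hne
    have hι : Sigma.ι (fun _ : S => A) s = Sigma.ι (fun _ : S => A) s' := by
      have h1 : Sigma.ι (fun _ : S => A) s ≫ w.hom
          = Sigma.ι (fun _ : S => A) s' ≫ w.hom := by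
        rw [hwt s, hwt s', hss]
      exact (cancel_mono w.hom).mp h1
    have hpb := isPullback_initial_to_of_cofan_isVanKampen hvk ⟨s⟩ ⟨s'⟩
      (fun hc => hne (congrArg Discrete.as hc))
    have l := hpb.lift (𝟙 A) (𝟙 A)
      (by rw [Category.id_comp, Category.id_comp]; exact hι)
    haveI := initialIsInitial.isIso_to l
    exact hA.1 ⟨IsInitial.ofIso initialIsInitial (asIso l).symm⟩
  have tsurj : Function.Surjective t := by
    intro f
    obtain ⟨s, g, hgf⟩ := SplittingCanonicalIsoProof.conn_factor A hA _
      (Limits.prod.lift (𝟙 A) f ≫ w.inv)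
    have hg1 : g = 𝟙 A := by
      have h1 : (Limits.prod.lift (𝟙 A) f ≫ w.inv) ≫ w.hom ≫ Limits.prod.fst = 𝟙 A := by
        rw [← Category.assoc, Category.assoc _ w.inv w.hom, Iso.inv_hom_id, Category.comp_id,
          Limits.prod.lift_fst]
      rw [hgf, Category.assoc, hwfst s, Category.comp_id] at h1
      exact h1
    refine ⟨s, ?_⟩
    have h2 : Sigma.ι (fun _ : S => A) s ≫ w.hom = Limits.prod.lift (𝟙 A) f := by
      have h3 : Sigma.ι (fun _ : S => A) s = Limits.prod.lift (𝟙 A) f ≫ w.inv := by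
        rw [hgf, hg1, Category.id_comp]
      rw [h3, Category.assoc, Iso.inv_hom_id, Category.comp_id]
    have h4 := (hwt s).symm.trans h2
    have h5 := congrArg (fun k => k ≫ Limits.prod.snd) h4
    rw [Limits.prod.lift_snd, Limits.prod.lift_snd] at h5
    exact h5
  let E : S ≃ (A ⟶ X) := Equiv.ofBijective t ⟨tinj, tsurj⟩
  let σ : (∐ fun _ : S => A) ⟶ (∐ fun _ : (A ⟶ X) => A) :=
    Sigma.desc (fun s => Sigma.ι (fun _ : (A ⟶ X) => A) (t s))
  have hσ : IsIso σ := by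
    refine ⟨Sigma.desc (fun f => Sigma.ι (fun _ : S => A) (E.symm f)), ?_, ?_⟩
    · apply Sigma.hom_ext
      intro s
      have hE : E.symm (t s) = s := E.symm_apply_apply s
      simp only [σ, Category.comp_id]
      rw [← Category.assoc, Limits.Sigma.ι_desc, Limits.Sigma.ι_desc, hE]
    · apply Sigma.hom_ext
      intro f
      have hE : t (E.symm f) = f := E.apply_symm_apply f
      simp only [σ, Category.comp_id]
      rw [← Category.assoc, Limits.Sigma.ι_desc, Limits.Sigma.ι_desc, hE]
  have hfactor : σ ≫ Sigma.desc (f := fun _ : (A ⟶ X) => A)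
      (fun f => Limits.prod.lift (𝟙 A) f) = w.hom := by
    apply Sigma.hom_ext
    intro s
    rw [← Category.assoc]
    simp only [σ]
    rw [Limits.Sigma.ι_desc, Limits.Sigma.ι_desc]
    exact (hwt s).symm
  have hiso : Sigma.desc (f := fun _ : (A ⟶ X) => A)
      (fun f => Limits.prod.lift (𝟙 A) f) = inv σ ≫ w.hom := by
    rw [← hfactor, IsIso.inv_hom_id_assoc]
  rw [hiso]
  infer_instance
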